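/- arXiv:1907.01434 — 3 statements merged into one kernel-verified Lean document; each statement's English description precedes it below -/
import Mathlib

section
/- (Lemma 4.2, A₁-weight duality implies pointwise Riesz potential comparison) Let n ≥ 2 and β ∈ (0,n). Let f, g : ℝⁿ → [0,∞) be measurable and suppose there is a constant C such that ∫_{ℝⁿ} f(x) ω(x) dx ≤ C ∫_{ℝⁿ} g(x) ω(x) dx for every Muckenhoupt A₁ weight ω. Then I_β f(z) ≤ C · I_β g(z) for almost every z ∈ ℝⁿ. -/
open MeasureTheory Metric Set Filter ENNReal
open scoped RealInnerProductSpace NNReal Topology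

noncomputable section

abbrev En (n : ℕ) := EuclideanSpace ℝ (Fin n)

variable {n : ℕ}

/-- Carathéodory vector field satisfying the growth and monotonicity conditions. -/
def GoodVF (n : ℕ) (p Λ₁ Λ₂ : ℝ) (A : En n → En n → En n) : Prop :=
  (∀ ξ : En n, Measurable fun x => A x ξ) ∧
  (∀ᵐ x ∂(volume : Measure (En n)), Continuous fun ξ => A x ξ) ∧
  (∀ᵐ x ∂(volume : Measure (En n)), ∀ ξ : En n, ‖A x ξ‖ ≤ Λ₁ * ‖ξ‖ ^ (p - 1)) ∧
  (∀ᵐ x ∂(volume : Measure (En n)), ∀ ξ η : En n, (ξ, η) ≠ (0, 0) →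
    Λ₂ * (‖ξ‖ ^ 2 + ‖η‖ ^ 2) ^ ((p - 2) / 2) * ‖ξ - η‖ ^ 2 ≤ ⟪A x ξ - A x η, ξ - η⟫)

/-- Smooth test function compactly supported in `Ω`. -/
def TestFn (Ω : Set (En n)) (φ : En n → ℝ) : Prop :=
  ContDiff ℝ (⊤ : ℕ∞) φ ∧ HasCompactSupport φ ∧ tsupport φ ⊆ Ω

/-- Weak solution of `div A(x,∇u) = div f` in `Ω`. -/
def WeakSol (Ω : Set (En n)) (A : En n → En n → En n) (f : En n → En n) (u : En n → ℝ) : Prop :=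
  (∀ᵐ x ∂(volume : Measure (En n)).restrict Ω, DifferentiableAt ℝ u x) ∧
  ∀ φ : En n → ℝ, TestFn Ω φ →
    (∫ x in Ω, ⟪A x (gradient u x), gradient φ x⟫) = ∫ x in Ω, ⟪f x, gradient φ x⟫

/-- `v` lies in the `W^{1,p}`-closure of smooth compactly supported functions on `Ω`. -/
def W1pZero (Ω : Set (En n)) (p : ℝ) (v : En n → ℝ) : Prop :=
  ∃ φ : ℕ → En n → ℝ, (∀ k, TestFn Ω (φ k)) ∧
    Tendsto (fun k => ∫ x in Ω, |v x - φ k x| ^ p) atTop (𝓝 0) ∧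
    Tendsto (fun k => ∫ x in Ω, ‖gradient v x - gradient (φ k) x‖ ^ p) atTop (𝓝 0)

/-- Fractional maximal function `M_α`. -/
def frMax (α : ℝ) (h : En n → ℝ≥0∞) (x : En n) : ℝ≥0∞ :=
  ⨆ (ρ : ℝ) (_ : 0 < ρ), ENNReal.ofReal (ρ ^ α) * ((∫⁻ y in ball x ρ, h y) / volume (ball x ρ))

/-- Cut-off fractional maximal function `M^r_α`. -/
def frMaxLt (α r : ℝ) (h : En n → ℝ≥0∞) (x : En n) : ℝ≥0∞ :=
  ⨆ (ρ : ℝ) (_ : 0 < ρ) (_ : ρ < r),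
    ENNReal.ofReal (ρ ^ α) * ((∫⁻ y in ball x ρ, h y) / volume (ball x ρ))

/-- Riesz potential of a nonnegative function. -/
def riesz (n : ℕ) (β : ℝ) (h : En n → ℝ≥0∞) (x : En n) : ℝ≥0∞ :=
  ∫⁻ y, h y * ENNReal.ofReal (‖x - y‖ ^ (β - (n : ℝ)))

/-- Riesz potential of a measure. -/
def rieszM (n : ℕ) (β : ℝ) (ν : Measure (En n)) (x : En n) : ℝ≥0∞ :=
  ∫⁻ r in Ioi (0 : ℝ), ν (ball x r) * ENNReal.ofReal (r ^ (β - (n : ℝ) - 1))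

/-- Wolff potential of a measure. -/
def wolff (n : ℕ) (α β : ℝ) (ν : Measure (En n)) (x : En n) : ℝ≥0∞ :=
  ∫⁻ r in Ioi (0 : ℝ),
    (ν (ball x r) / ENNReal.ofReal (r ^ ((n : ℝ) - α * β))) ^ (1 / (β - 1)) *
      ENNReal.ofReal (1 / r)

/-- Riesz capacity of a compact set. -/
def rieszCap (n : ℕ) (α p : ℝ) (K : Set (En n)) : ℝ≥0∞ :=
  ⨅ (φ : En n → ℝ≥0∞) (_ : Measurable φ) (_ : ∀ x ∈ K, 1 ≤ riesz n α φ x), ∫⁻ x, φ x ^ p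

/-- The `ω`-measure of a set. -/
def wSet (ω : En n → ℝ≥0∞) (S : Set (En n)) : ℝ≥0∞ := ∫⁻ x in S, ω x

/-- `ω` is an `A_∞` weight with constants `(C₀, ν₀)`. -/
def IsAInfty (ω : En n → ℝ≥0∞) (C₀ ν₀ : ℝ) : Prop :=
  ∀ (x : En n) (r : ℝ), 0 < r → ∀ S ⊆ ball x r, MeasurableSet S →
    wSet ω S ≤ ENNReal.ofReal C₀ * (volume S / volume (ball x r)) ^ ν₀ * wSet ω (ball x r)

/-- `ω` is an `A₁` weight. -/
def IsA1 (ω : En n → ℝ≥0∞) : Prop :=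
  Measurable ω ∧ (∀ (x : En n) (r : ℝ), 0 < r → ∫⁻ y in ball x r, ω y < ∞) ∧
  ∃ C : ℝ≥0∞, C < ∞ ∧ ∀ (x : En n) (r : ℝ), 0 < r →
    ((∫⁻ y in ball x r, ω y) / volume (ball x r)) *
      essSup (fun y => (ω y)⁻¹) ((volume : Measure (En n)).restrict (ball x r)) ≤ C

/-- `(δ, R₀)`-Reifenberg flatness. -/
def ReifFlat (δ R₀ : ℝ) (Ω : Set (En n)) : Prop :=
  ∀ x ∈ frontier Ω, ∀ r : ℝ, 0 < r → r ≤ R₀ →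
    ∃ e : En n, ‖e‖ = 1 ∧
      (ball x r ∩ {y | δ * r < ⟪y - x, e⟫} ⊆ Ω) ∧
      (ball x r ∩ Ω ⊆ {y | -(δ * r) < ⟪y - x, e⟫})

/-- The BMO seminorm `[A]_s^r`. -/
def ABmo (n : ℕ) (p : ℝ) (A : En n → En n → En n) (s r : ℝ) : ℝ≥0∞ :=
  ⨆ (y : En n) (ρ : ℝ) (_ : 0 < ρ) (_ : ρ ≤ r),
    ((∫⁻ x in ball y ρ, (⨆ (ξ : En n) (_ : ξ ≠ 0),
        ENNReal.ofReal (‖A x ξ - ⨍ z in ball y ρ, A z ξ‖ / ‖ξ‖ ^ (p - 1))) ^ s) /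
      volume (ball y ρ)) ^ (1 / s)

/-- The weighted Lorentz quasinorm `‖h‖_{L^{q,s}_ω(Ω)}` (`s = ∞` allowed). -/
def wLorentz (ω : En n → ℝ≥0∞) (Ω : Set (En n)) (q : ℝ) (s : ℝ≥0∞) (h : En n → ℝ≥0∞) :
    ℝ≥0∞ :=
  if s = ∞ then ⨆ (l : ℝ) (_ : 0 < l),
      ENNReal.ofReal l * (wSet ω {x ∈ Ω | ENNReal.ofReal l < h x}) ^ (1 / q)
  else (ENNReal.ofReal q * ∫⁻ l in Ioi (0 : ℝ),
      ENNReal.ofReal (l ^ (s.toReal - 1)) *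
        (wSet ω {x ∈ Ω | ENNReal.ofReal l < h x}) ^ (s.toReal / q)) ^ (1 / s.toReal)


/-- `u` is a weak solution of `div A(x,∇u) = div f` in `Ω` with `u = g` on `∂Ω`,
with the natural integrability assumptions on the data. -/
def DirichletSol (Ω : Set (En n)) (p : ℝ) (A : En n → En n → En n) (f : En n → En n)
    (g u : En n → ℝ) : Prop :=
  WeakSol Ω A f u ∧
  MemLp (fun x => gradient u x) (ENNReal.ofReal p) (volume.restrict Ω) ∧
  (∀ᵐ x ∂(volume : Measure (En n)).restrict Ω, DifferentiableAt ℝ g x) ∧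
  MemLp (fun x => gradient g x) (ENNReal.ofReal p) (volume.restrict Ω) ∧
  MemLp f (ENNReal.ofReal (p / (p - 1))) (volume.restrict Ω) ∧
  W1pZero Ω p (fun x => u x - g x)


private lemma alg_aux (R α nn : ℝ) (hR : 0 < R) (k : ℕ) :
    (R / 2 ^ (k + 1)) ^ α * (R / 2 ^ k) ^ nn
      = R ^ (nn + α) * (2 : ℝ) ^ (-α) * ((2 : ℝ) ^ (-(nn + α))) ^ k := by
  have h2 : (0:ℝ) < 2 := two_pos
  have hb1 : (0:ℝ) < R / 2 ^ (k + 1) := by positivity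
  have hb2 : (0:ℝ) < R / 2 ^ k := by positivity
  have hLpos : 0 < (R / 2 ^ (k + 1)) ^ α * (R / 2 ^ k) ^ nn := by positivity
  have hRpos : 0 < R ^ (nn + α) * (2 : ℝ) ^ (-α) * ((2 : ℝ) ^ (-(nn + α))) ^ k := by positivity
  rw [← Real.exp_log hLpos, ← Real.exp_log hRpos]
  congr 1
  rw [Real.log_mul (by positivity) (by positivity), Real.log_rpow hb1, Real.log_rpow hb2,
    Real.log_div hR.ne' (by positivity), Real.log_div hR.ne' (by positivity),
    Real.log_pow, Real.log_pow,
    Real.log_mul (by positivity) (by positivity), Real.log_mul (by positivity) (by positivity),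
    Real.log_rpow hR, Real.log_rpow h2, Real.log_pow, Real.log_rpow h2]
  push_cast
  ring

private lemma kernel_ball_bound (n : ℕ) (α : ℝ) (hα0 : α < 0) (hαn : -(n : ℝ) < α) :
    ∃ c : ℝ≥0∞, c ≠ ∞ ∧ ∀ (z : En n) (R : ℝ), 0 < R →
      (∫⁻ y in ball z R, ENNReal.ofReal (‖z - y‖ ^ α)) ≤
        c * ENNReal.ofReal (R ^ ((n : ℝ) + α)) := by
  have hna : 0 < (n : ℝ) + α := by linarith
  have hqlt : ENNReal.ofReal ((2:ℝ) ^ (-((n:ℝ) + α))) < 1 := by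
    rw [← ENNReal.ofReal_one]
    exact ENNReal.ofReal_lt_ofReal_iff one_pos |>.2
      (Real.rpow_lt_one_of_one_lt_of_neg one_lt_two (by linarith))
  refine ⟨ENNReal.ofReal ((2:ℝ) ^ (-α)) * volume (ball (0 : En n) 1) *
      (1 - ENNReal.ofReal ((2:ℝ) ^ (-((n:ℝ) + α))))⁻¹, ?_, ?_⟩
  · refine ENNReal.mul_ne_top (ENNReal.mul_ne_top ENNReal.ofReal_ne_top
      measure_ball_lt_top.ne) ?_
    rw [Ne, ENNReal.inv_eq_top]
    exact (tsub_pos_of_lt hqlt).ne'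
  · intro z R hR
    set A : ℕ → Set (En n) := fun k => ball z (R / 2 ^ k) \ ball z (R / 2 ^ (k + 1)) with hA
    have cover : ball z R ⊆ {z} ∪ ⋃ k, A k := by
      intro y hy
      rcases eq_or_ne y z with rfl | hyz
      · exact Or.inl rfl
      refine Or.inr ?_
      have ht0 : 0 < dist y z := dist_pos.2 hyz
      have htR : dist y z < R := mem_ball.1 hy
      have hex : ∃ k : ℕ, R / 2 ^ (k + 1) ≤ dist y z := by
        obtain ⟨m, hm⟩ := pow_unbounded_of_one_lt (R / dist y z) (one_lt_two (α := ℝ))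
        refine ⟨m, ?_⟩
        rw [div_lt_iff₀ ht0] at hm
        rw [div_le_iff₀ (by positivity)]
        have h2m : (2:ℝ) ^ m ≤ 2 ^ (m + 1) :=
          pow_le_pow_right₀ one_le_two (Nat.le_succ m)
        nlinarith [ht0]
      have hk2 : dist y z < R / 2 ^ (Nat.find hex) := by
        cases h' : Nat.find hex with
        | zero => simpa using htR
        | succ m =>
          have hmin : ¬ R / 2 ^ (m + 1) ≤ dist y z := Nat.find_min hex (by omega)
          exact lt_of_not_ge hmin
      exact mem_iUnion.2 ⟨Nat.find hex, mem_ball.2 hk2,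
        fun hmem => absurd (mem_ball.1 hmem) (not_lt.2 (Nat.find_spec hex))⟩
    have hsum : ∀ k : ℕ, (∫⁻ y in A k, ENNReal.ofReal (‖z - y‖ ^ α)) ≤
        ENNReal.ofReal (R ^ ((n:ℝ) + α)) * (ENNReal.ofReal ((2:ℝ) ^ (-α)) *
          volume (ball (0 : En n) 1) * (ENNReal.ofReal ((2:ℝ) ^ (-((n:ℝ) + α)))) ^ k) := by
      intro k
      have hr1 : (0:ℝ) < R / 2 ^ (k + 1) := by positivity
      have hr2 : (0:ℝ) < R / 2 ^ k := by positivity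
      have step1 : (∫⁻ y in A k, ENNReal.ofReal (‖z - y‖ ^ α)) ≤
          ENNReal.ofReal ((R / 2 ^ (k + 1)) ^ α) * volume (A k) := by
        rw [← setLIntegral_const]
        refine setLIntegral_mono measurable_const fun y hy => ?_
        refine ENNReal.ofReal_le_ofReal ?_
        have hle : R / 2 ^ (k + 1) ≤ ‖z - y‖ := by
          have h2 := hy.2
          rw [mem_ball, not_lt] at h2
          calc R / 2 ^ (k + 1) ≤ dist y z := h2
            _ = ‖z - y‖ := by rw [dist_eq_norm, norm_sub_rev]
        exact Real.rpow_le_rpow_of_nonpos hr1 hle hα0.le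
      have step2 : volume (A k) ≤
          ENNReal.ofReal ((R / 2 ^ k) ^ ((n:ℝ))) * volume (ball (0 : En n) 1) := by
        calc volume (A k) ≤ volume (ball z (R / 2 ^ k)) := measure_mono diff_subset
          _ = ENNReal.ofReal ((R / 2 ^ k) ^ Module.finrank ℝ (En n)) * volume (ball (0 : En n) 1) :=
              Measure.addHaar_ball_of_pos volume z hr2
          _ = _ := by rw [finrank_euclideanSpace_fin, ← Real.rpow_natCast]
      calc (∫⁻ y in A k, ENNReal.ofReal (‖z - y‖ ^ α))
          ≤ ENNReal.ofReal ((R / 2 ^ (k + 1)) ^ α) *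
            (ENNReal.ofReal ((R / 2 ^ k) ^ ((n:ℝ))) * volume (ball (0 : En n) 1)) :=
            step1.trans (mul_le_mul_right step2 _)
        _ = ENNReal.ofReal ((R / 2 ^ (k + 1)) ^ α * (R / 2 ^ k) ^ ((n:ℝ))) *
            volume (ball (0 : En n) 1) := by
            rw [← mul_assoc, ← ENNReal.ofReal_mul (Real.rpow_nonneg hr1.le α)]
        _ = ENNReal.ofReal (R ^ ((n:ℝ) + α) * (2:ℝ) ^ (-α) * ((2:ℝ) ^ (-((n:ℝ) + α))) ^ k) *
            volume (ball (0 : En n) 1) := by rw [alg_aux R α ((n:ℝ)) hR k]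
        _ = _ := by
            rw [ENNReal.ofReal_mul (by positivity), ENNReal.ofReal_mul (by positivity),
              ENNReal.ofReal_pow (by positivity)]
            ring
    calc (∫⁻ y in ball z R, ENNReal.ofReal (‖z - y‖ ^ α))
        ≤ ∫⁻ y in {z} ∪ ⋃ k, A k, ENNReal.ofReal (‖z - y‖ ^ α) := lintegral_mono_set cover
      _ ≤ (∫⁻ y in ({z} : Set (En n)), ENNReal.ofReal (‖z - y‖ ^ α)) +
          ∫⁻ y in ⋃ k, A k, ENNReal.ofReal (‖z - y‖ ^ α) := lintegral_union_le _ _ _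
      _ ≤ 0 + ∑' k, ∫⁻ y in A k, ENNReal.ofReal (‖z - y‖ ^ α) := by
          refine add_le_add ?_ (lintegral_iUnion_le _ _)
          rw [lintegral_singleton]
          simp [Real.zero_rpow hα0.ne]
      _ ≤ ∑' k, ENNReal.ofReal (R ^ ((n:ℝ) + α)) * (ENNReal.ofReal ((2:ℝ) ^ (-α)) *
          volume (ball (0 : En n) 1) * (ENNReal.ofReal ((2:ℝ) ^ (-((n:ℝ) + α)))) ^ k) := by
          rw [zero_add]; exact ENNReal.tsum_le_tsum hsum
      _ = ENNReal.ofReal ((2:ℝ) ^ (-α)) * volume (ball (0 : En n) 1) *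
          (1 - ENNReal.ofReal ((2:ℝ) ^ (-((n:ℝ) + α))))⁻¹ * ENNReal.ofReal (R ^ ((n:ℝ) + α)) := by
          rw [ENNReal.tsum_mul_left, ENNReal.tsum_mul_left, ENNReal.tsum_geometric]
          ring

private lemma isA1_kernel (n : ℕ) (hn : 0 < n) (α : ℝ) (hα0 : α < 0) (hαn : -(n : ℝ) < α)
    (z : En n) : IsA1 (fun y : En n => ENNReal.ofReal (‖z - y‖ ^ α)) := by
  obtain ⟨c, hc, hkey⟩ := kernel_ball_bound n α hα0 hαn
  haveI : Nonempty (Fin n) := Fin.pos_iff_nonempty.mp hn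
  haveI : Nontrivial (En n) := inferInstance
  have hV0 : volume (ball (0 : En n) 1) ≠ 0 := (measure_ball_pos _ _ one_pos).ne'
  have hVt : volume (ball (0 : En n) 1) ≠ ∞ := measure_ball_lt_top.ne
  refine ⟨((measurable_const.sub measurable_id).norm.pow_const α).ennreal_ofReal, ?_, ?_⟩
  · intro x r hr
    have hsub : ball x r ⊆ ball z (dist z x + r) := fun y hy => by
      rw [mem_ball] at *
      have := dist_triangle y x z
      rw [dist_comm x z] at this
      linarith
    calc (∫⁻ y in ball x r, ENNReal.ofReal (‖z - y‖ ^ α))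
        ≤ ∫⁻ y in ball z (dist z x + r), ENNReal.ofReal (‖z - y‖ ^ α) :=
          lintegral_mono_set hsub
      _ ≤ c * ENNReal.ofReal ((dist z x + r) ^ ((n:ℝ) + α)) :=
          hkey z _ (by have := dist_nonneg (x := z) (y := x); linarith)
      _ < ∞ := ENNReal.mul_lt_top hc.lt_top ENNReal.ofReal_lt_top
  · refine ⟨ENNReal.ofReal ((3:ℝ) ^ (-α)) +
      c * ENNReal.ofReal ((3:ℝ) ^ ((n:ℝ))) / volume (ball (0 : En n) 1), ?_, ?_⟩
    · exact ENNReal.add_lt_top.2 ⟨ENNReal.ofReal_lt_top,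
        ENNReal.div_lt_top (ENNReal.mul_ne_top hc ENNReal.ofReal_ne_top) hV0⟩
    · intro x r hr
      have hvolB0 : volume (ball x r) ≠ 0 := (measure_ball_pos _ _ hr).ne'
      have hvolBt : volume (ball x r) ≠ ∞ := measure_ball_lt_top.ne
      by_cases hcase : dist z x < 2 * r
      · -- near case
        have hsub3 : ball x r ⊆ ball z (3 * r) := fun y hy => by
          rw [mem_ball] at *
          have := dist_triangle y x z
          rw [dist_comm x z] at this
          linarith
        have hA : (∫⁻ y in ball x r, ENNReal.ofReal (‖z - y‖ ^ α)) ≤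
            c * ENNReal.ofReal ((3 * r) ^ ((n:ℝ) + α)) :=
          (lintegral_mono_set hsub3).trans (hkey z (3 * r) (by linarith))
        have hzae : ∀ᵐ y ∂(volume : Measure (En n)).restrict (ball x r), y ≠ z := by
          refine ae_restrict_of_ae ?_
          refine ae_iff.2 ?_
          simpa using measure_singleton (μ := (volume : Measure (En n))) z
        have hE : essSup (fun y => (ENNReal.ofReal (‖z - y‖ ^ α))⁻¹)
            ((volume : Measure (En n)).restrict (ball x r)) ≤
            ENNReal.ofReal ((3 * r) ^ (-α)) := by
          refine essSup_le_of_ae_le _ ?_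
          filter_upwards [hzae, ae_restrict_mem measurableSet_ball] with y hyz hyb
          have ht0 : 0 < ‖z - y‖ := norm_pos_iff.2 (sub_ne_zero.2 (Ne.symm hyz))
          have ht3 : ‖z - y‖ ≤ 3 * r := by
            rw [mem_ball] at hyb
            have h1 : ‖z - y‖ = dist y z := by rw [dist_eq_norm, norm_sub_rev]
            have := dist_triangle y x z
            rw [dist_comm x z] at this
            linarith
          rw [← ENNReal.ofReal_inv_of_pos (Real.rpow_pos_of_pos ht0 α),
            ← Real.rpow_neg ht0.le]
          exact ENNReal.ofReal_le_ofReal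
            (Real.rpow_le_rpow ht0.le ht3 (by linarith))
        have hvol : volume (ball x r) =
            ENNReal.ofReal (r ^ ((n:ℝ))) * volume (ball (0 : En n) 1) := by
          rw [Measure.addHaar_ball_of_pos volume x hr, finrank_euclideanSpace_fin,
            ← Real.rpow_natCast]
        have hreal : (3 * r) ^ ((n:ℝ) + α) * (3 * r) ^ (-α) = 3 ^ ((n:ℝ)) * r ^ ((n:ℝ)) := by
          rw [← Real.rpow_add (by linarith), add_neg_cancel_right,
            Real.mul_rpow (by norm_num) hr.le]
        have h1 : (∫⁻ y in ball x r, ENNReal.ofReal (‖z - y‖ ^ α)) *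
            essSup (fun y => (ENNReal.ofReal (‖z - y‖ ^ α))⁻¹)
              ((volume : Measure (En n)).restrict (ball x r)) ≤
            (c * ENNReal.ofReal ((3:ℝ) ^ ((n:ℝ))) / volume (ball (0 : En n) 1)) *
              volume (ball x r) := by
          have hC2vol : (c * ENNReal.ofReal ((3:ℝ) ^ ((n:ℝ))) / volume (ball (0 : En n) 1)) *
              volume (ball x r) =
              c * ENNReal.ofReal ((3:ℝ) ^ ((n:ℝ))) * ENNReal.ofReal (r ^ ((n:ℝ))) := by
            have : (c * ENNReal.ofReal ((3:ℝ) ^ ((n:ℝ))) / volume (ball (0 : En n) 1)) *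
                volume (ball x r) =
                c * ENNReal.ofReal ((3:ℝ) ^ ((n:ℝ))) * ENNReal.ofReal (r ^ ((n:ℝ))) *
                  ((volume (ball (0 : En n) 1))⁻¹ * volume (ball (0 : En n) 1)) := by
              rw [hvol, div_eq_mul_inv]; ring
            rw [this, ENNReal.inv_mul_cancel hV0 hVt, mul_one]
          rw [hC2vol]
          calc (∫⁻ y in ball x r, ENNReal.ofReal (‖z - y‖ ^ α)) *
              essSup (fun y => (ENNReal.ofReal (‖z - y‖ ^ α))⁻¹)
                ((volume : Measure (En n)).restrict (ball x r))
              ≤ (c * ENNReal.ofReal ((3 * r) ^ ((n:ℝ) + α))) *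
                ENNReal.ofReal ((3 * r) ^ (-α)) := mul_le_mul' hA hE
            _ = c * ENNReal.ofReal ((3 * r) ^ ((n:ℝ) + α) * (3 * r) ^ (-α)) := by
                rw [mul_assoc, ← ENNReal.ofReal_mul (Real.rpow_nonneg (by linarith) _)]
            _ = c * ENNReal.ofReal ((3:ℝ) ^ ((n:ℝ)) * r ^ ((n:ℝ))) := by rw [hreal]
            _ = c * ENNReal.ofReal ((3:ℝ) ^ ((n:ℝ))) * ENNReal.ofReal (r ^ ((n:ℝ))) := by
                rw [ENNReal.ofReal_mul (by positivity), mul_assoc]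
        calc (∫⁻ y in ball x r, ENNReal.ofReal (‖z - y‖ ^ α)) / volume (ball x r) *
            essSup (fun y => (ENNReal.ofReal (‖z - y‖ ^ α))⁻¹)
              ((volume : Measure (En n)).restrict (ball x r))
            = (∫⁻ y in ball x r, ENNReal.ofReal (‖z - y‖ ^ α)) *
              essSup (fun y => (ENNReal.ofReal (‖z - y‖ ^ α))⁻¹)
                ((volume : Measure (En n)).restrict (ball x r)) / volume (ball x r) := by
              rw [div_eq_mul_inv, div_eq_mul_inv, mul_right_comm]
          _ ≤ (c * ENNReal.ofReal ((3:ℝ) ^ ((n:ℝ))) / volume (ball (0 : En n) 1)) *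
              volume (ball x r) / volume (ball x r) :=
              ENNReal.div_le_div_right h1 _
          _ = c * ENNReal.ofReal ((3:ℝ) ^ ((n:ℝ))) / volume (ball (0 : En n) 1) := by
              rw [mul_div_assoc, ENNReal.div_self hvolB0 hvolBt, mul_one]
          _ ≤ _ := le_add_self
      · -- far case
        push_neg at hcase
        have hdr : 0 < dist z x - r := by linarith
        have hbound : ∀ y ∈ ball x r, ENNReal.ofReal (‖z - y‖ ^ α) ≤
            ENNReal.ofReal ((dist z x - r) ^ α) := fun y hy => by
          rw [mem_ball] at hy
          refine ENNReal.ofReal_le_ofReal ?_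
          have t1 := dist_triangle z y x
          have h1 : dist z y = ‖z - y‖ := dist_eq_norm z y
          have h2 : dist z x - r ≤ ‖z - y‖ := by linarith
          exact Real.rpow_le_rpow_of_nonpos hdr h2 hα0.le
        have hA : (∫⁻ y in ball x r, ENNReal.ofReal (‖z - y‖ ^ α)) ≤
            ENNReal.ofReal ((dist z x - r) ^ α) * volume (ball x r) := by
          calc (∫⁻ y in ball x r, ENNReal.ofReal (‖z - y‖ ^ α))
              ≤ ∫⁻ _ in ball x r, ENNReal.ofReal ((dist z x - r) ^ α) :=
              setLIntegral_mono measurable_const hbound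
            _ = _ := setLIntegral_const _ _
        have hE : essSup (fun y => (ENNReal.ofReal (‖z - y‖ ^ α))⁻¹)
            ((volume : Measure (En n)).restrict (ball x r)) ≤
            ENNReal.ofReal ((dist z x + r) ^ (-α)) := by
          refine essSup_le_of_ae_le _ ?_
          filter_upwards [ae_restrict_mem measurableSet_ball] with y hyb
          rw [mem_ball] at hyb
          have t1 := dist_triangle z y x
          have t2 := dist_triangle z x y
          have t3 : dist x y = dist y x := dist_comm x y
          have h1 : dist z y = ‖z - y‖ := dist_eq_norm z y
          have h2 : dist z x - r ≤ ‖z - y‖ := by linarith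
          have ht0 : 0 < ‖z - y‖ := lt_of_lt_of_le hdr h2
          have ht3 : ‖z - y‖ ≤ dist z x + r := by linarith
          rw [← ENNReal.ofReal_inv_of_pos (Real.rpow_pos_of_pos ht0 α),
            ← Real.rpow_neg ht0.le]
          exact ENNReal.ofReal_le_ofReal (Real.rpow_le_rpow ht0.le ht3 (by linarith))
        have hreal : (dist z x - r) ^ α * (dist z x + r) ^ (-α) ≤ (3:ℝ) ^ (-α) := by
          have h3 : dist z x + r ≤ 3 * (dist z x - r) := by linarith
          have hs : (0:ℝ) ≤ -α := by linarith
          have h4 : (dist z x + r) ^ (-α) ≤ (3 * (dist z x - r)) ^ (-α) :=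
            Real.rpow_le_rpow (by linarith) h3 hs
          have h5 : (3 * (dist z x - r)) ^ (-α) = 3 ^ (-α) * (dist z x - r) ^ (-α) :=
            Real.mul_rpow (by norm_num) hdr.le
          have h6 : (dist z x - r) ^ α = ((dist z x - r) ^ (-α))⁻¹ := by
            rw [← Real.rpow_neg hdr.le, neg_neg]
          have hx0 : (0:ℝ) < (dist z x - r) ^ (-α) := Real.rpow_pos_of_pos hdr _
          rw [h6]
          calc ((dist z x - r) ^ (-α))⁻¹ * (dist z x + r) ^ (-α)
              ≤ ((dist z x - r) ^ (-α))⁻¹ * (3 ^ (-α) * (dist z x - r) ^ (-α)) := by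
                exact mul_le_mul_of_nonneg_left (h4.trans_eq h5) (by positivity)
            _ = 3 ^ (-α) := by field_simp
        calc (∫⁻ y in ball x r, ENNReal.ofReal (‖z - y‖ ^ α)) / volume (ball x r) *
            essSup (fun y => (ENNReal.ofReal (‖z - y‖ ^ α))⁻¹)
              ((volume : Measure (En n)).restrict (ball x r))
            ≤ ENNReal.ofReal ((dist z x - r) ^ α) * ENNReal.ofReal ((dist z x + r) ^ (-α)) := by
              refine mul_le_mul' (ENNReal.div_le_of_le_mul' ?_) hE
              rwa [mul_comm] at hA
          _ = ENNReal.ofReal ((dist z x - r) ^ α * (dist z x + r) ^ (-α)) :=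
              (ENNReal.ofReal_mul (Real.rpow_nonneg hdr.le α)).symm
          _ ≤ ENNReal.ofReal ((3:ℝ) ^ (-α)) := ENNReal.ofReal_le_ofReal hreal
          _ ≤ _ := le_self_add

/-- Lemma 4.2: `A₁`-weight duality implies pointwise Riesz potential comparison. -/
theorem stmt11 (n : ℕ) (hn : 2 ≤ n) (β : ℝ) (hβ0 : 0 < β) (hβn : β < n)
    (f g : En n → ℝ≥0∞) (hf : Measurable f) (hg : Measurable g) (C : ℝ)
    (h : ∀ ω : En n → ℝ≥0∞, IsA1 ω →
      (∫⁻ x, f x * ω x) ≤ ENNReal.ofReal C * ∫⁻ x, g x * ω x) :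
    ∀ᵐ z ∂(volume : Measure (En n)),
      riesz n β f z ≤ ENNReal.ofReal C * riesz n β g z := by
  have hα0 : β - (n:ℝ) < 0 := by linarith
  have hαn : -(n:ℝ) < β - (n:ℝ) := by linarith
  refine ae_of_all _ fun z => ?_
  exact h (fun y => ENNReal.ofReal (‖z - y‖ ^ (β - (n:ℝ))))
    (isA1_kernel n (by omega) _ hα0 hαn z)
end
end

section
/- (Lemma 5.2, Hardy-type inequality for nondecreasing functions) Let k > 0, m > 0 and s ∈ ℝ. There exists a constant C = C(k,m,s) > 0 such that for every nondecreasing function H : (0,∞) → [0,∞), the inequality ∫₀^∞ ϱ^k ( ∫_ϱ^∞ H(r) r^{−s} dr/r )^m dϱ/ϱ ≤ C ∫₀^∞ ϱ^k ( H(ϱ)/ϱ^s )^m dϱ/ϱ holds (both sides possibly infinite). -/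
open MeasureTheory Metric Set Filter ENNReal
open scoped RealInnerProductSpace NNReal Topology

noncomputable section

variable {n : ℕ}

section HardyAux

/-- Scaling change of variables for the Lebesgue integral on `(0,∞)`. -/
lemma hardy_lint_scale (f : ℝ → ℝ≥0∞) (hf : Measurable f) {c : ℝ} (hc : 0 < c) :
    ∫⁻ x in Ioi (0:ℝ), f (c * x) = ENNReal.ofReal c⁻¹ * ∫⁻ x in Ioi (0:ℝ), f x := by
  have hpre : (fun x : ℝ => c * x) ⁻¹' (Ioi (0:ℝ)) = Ioi 0 := by
    ext x
    simp only [Set.mem_preimage, Set.mem_Ioi]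
    constructor
    · intro h; nlinarith
    · intro h; exact mul_pos hc h
  have hmap : Measure.map (fun x : ℝ => c * x) (volume.restrict (Ioi (0:ℝ)))
      = ENNReal.ofReal c⁻¹ • volume.restrict (Ioi (0:ℝ)) := by
    conv_lhs => rw [← hpre]
    rw [← Measure.restrict_map (measurable_const_mul c) measurableSet_Ioi,
      Real.map_volume_mul_left hc.ne', Measure.restrict_smul,
      abs_of_pos (inv_pos.2 hc)]
  calc ∫⁻ x in Ioi (0:ℝ), f (c * x)
      = ∫⁻ y, f y ∂(Measure.map (fun x : ℝ => c * x) (volume.restrict (Ioi (0:ℝ)))) :=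
        (lintegral_map hf (measurable_const_mul c)).symm
    _ = ENNReal.ofReal c⁻¹ * ∫⁻ x in Ioi (0:ℝ), f x := by
        rw [hmap, lintegral_smul_measure, smul_eq_mul]

/-- Power of a sum estimate with geometric weights. -/
lemma hardy_sum_rpow {m τ : ℝ} (hm : 0 < m) (hτ : 0 < τ) :
    ∃ C : ℝ≥0∞, C ≠ ∞ ∧ ∀ a : ℕ → ℝ≥0∞,
      (∑' j, a j) ^ m ≤ C * ∑' (j : ℕ), (2:ℝ≥0∞) ^ ((j:ℝ) * τ) * a j ^ m := by
  rcases le_or_gt m 1 with hm1 | hm1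
  · refine ⟨1, one_ne_top, fun a => ?_⟩
    rw [one_mul]
    have key : (∑' j, a j) ^ m ≤ ∑' j, a j ^ m := by
      have hsum : ∑' j, a j ≤ (∑' j, a j ^ m) ^ (1/m) := by
        rw [ENNReal.tsum_eq_iSup_sum]
        refine iSup_le fun s => ?_
        have h2 : (∑ j ∈ s, a j) ^ m ≤ ∑ j ∈ s, a j ^ m := by
          classical
          induction s using Finset.induction_on with
          | empty => simp [ENNReal.zero_rpow_of_pos hm]
          | insert _ _ hx ih =>
            rw [Finset.sum_insert hx, Finset.sum_insert hx]
            exact le_trans (ENNReal.rpow_add_le_add_rpow _ _ hm.le hm1)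
              (add_le_add_right ih _)
        calc ∑ j ∈ s, a j = ((∑ j ∈ s, a j) ^ m) ^ (1/m) := by
              rw [← ENNReal.rpow_mul, mul_one_div, div_self hm.ne', ENNReal.rpow_one]
          _ ≤ ((∑ j ∈ s, a j ^ m)) ^ (1/m) :=
              ENNReal.rpow_le_rpow h2 (by positivity)
          _ ≤ (∑' j, a j ^ m) ^ (1/m) :=
              ENNReal.rpow_le_rpow (ENNReal.sum_le_tsum s) (by positivity)
      calc (∑' j, a j) ^ m ≤ ((∑' j, a j ^ m) ^ (1/m)) ^ m :=
            ENNReal.rpow_le_rpow hsum hm.le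
        _ = ∑' j, a j ^ m := by
            rw [← ENNReal.rpow_mul, one_div, inv_mul_cancel₀ hm.ne', ENNReal.rpow_one]
    refine key.trans (ENNReal.tsum_le_tsum fun j => ?_)
    refine le_mul_of_one_le_left (by positivity) ?_
    calc (1:ℝ≥0∞) = (2:ℝ≥0∞) ^ (0:ℝ) := by simp
      _ ≤ 2 ^ ((j:ℝ) * τ) :=
        ENNReal.rpow_le_rpow_of_exponent_le one_le_two (by positivity)
  · -- m > 1 : Hölder
    set q : ℝ := Real.conjExponent m with hq
    have hpq : q.HolderConjugate m := (Real.HolderConjugate.conjExponent hm1).symm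
    have hq1 : 1 < q := hpq.lt
    have hq0 : 0 < q := lt_trans one_pos hq1
    set r : ℝ≥0∞ := (2:ℝ≥0∞) ^ (-(τ/m) * q) with hr
    have hrlt : r < 1 :=
      ENNReal.rpow_lt_one_of_one_lt_of_neg one_lt_two
        (by
          have : 0 < (τ/m) * q := by positivity
          linarith)
    have hgeo : (∑' j : ℕ, r ^ j) ≠ ∞ := by
      rw [ENNReal.tsum_geometric]
      exact ENNReal.inv_ne_top.2 (tsub_pos_of_lt hrlt).ne'
    refine ⟨(((∑' j : ℕ, r ^ j) ^ (1/q)) ^ m), ?_, fun a => ?_⟩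
    · exact ENNReal.rpow_ne_top_of_nonneg hm.le
        (ENNReal.rpow_ne_top_of_nonneg (by positivity) hgeo)
    · set u : ℕ → ℝ≥0∞ := fun j => (2:ℝ≥0∞) ^ (-((j:ℝ) * τ)/m) with hu
      set v : ℕ → ℝ≥0∞ := fun j => (2:ℝ≥0∞) ^ (((j:ℝ) * τ)/m) * a j with hv
      have huv : ∀ j, a j = (u * v) j := by
        intro j
        show a j = u j * v j
        rw [hu, hv]
        simp only []
        rw [← mul_assoc, ← ENNReal.rpow_add _ _ two_ne_zero ENNReal.ofNat_ne_top]
        rw [neg_div, neg_add_cancel, ENNReal.rpow_zero, one_mul]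
      have hmeas : ∀ f : ℕ → ℝ≥0∞, Measurable f := fun f => measurable_of_countable f
      have hold := ENNReal.lintegral_mul_le_Lp_mul_Lq (Measure.count : Measure ℕ) hpq
        (hmeas u).aemeasurable (hmeas v).aemeasurable
      rw [lintegral_count, lintegral_count, lintegral_count] at hold
      have step1 : ∑' j, a j ≤ (∑' j, u j ^ q) ^ (1/q) * (∑' j, v j ^ m) ^ (1/m) := by
        calc ∑' j, a j = ∑' j, (u * v) j := by exact tsum_congr huv
          _ ≤ _ := hold
      have huq : ∀ j : ℕ, u j ^ q = r ^ j := by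
        intro j
        rw [hu]
        simp only []
        rw [← ENNReal.rpow_natCast ((2:ℝ≥0∞) ^ (-(τ/m) * q)) j, ← ENNReal.rpow_mul,
          ← ENNReal.rpow_mul]
        ring_nf
      have hvm : ∀ j : ℕ, v j ^ m = (2:ℝ≥0∞) ^ ((j:ℝ) * τ) * a j ^ m := by
        intro j
        rw [hv]
        simp only []
        rw [ENNReal.mul_rpow_of_nonneg _ _ hm.le, ← ENNReal.rpow_mul,
          div_mul_cancel₀ _ hm.ne']
      calc (∑' j, a j) ^ m
          ≤ ((∑' j, u j ^ q) ^ (1/q) * (∑' j, v j ^ m) ^ (1/m)) ^ m :=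
            ENNReal.rpow_le_rpow step1 hm.le
        _ = ((∑' j, u j ^ q) ^ (1/q)) ^ m * ((∑' j, v j ^ m) ^ (1/m)) ^ m :=
            ENNReal.mul_rpow_of_nonneg _ _ hm.le
        _ = (((∑' j : ℕ, r ^ j) ^ (1/q)) ^ m) * ∑' j, v j ^ m := by
            rw [← ENNReal.rpow_mul (∑' j, v j ^ m), one_div_mul_cancel hm.ne', ENNReal.rpow_one]
            congr 3
            exact tsum_congr huq
        _ = (((∑' j : ℕ, r ^ j) ^ (1/q)) ^ m) * ∑' (j : ℕ), (2:ℝ≥0∞) ^ ((j:ℝ) * τ) * a j ^ m := by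
            congr 1
            exact tsum_congr hvm

/-- Dyadic covering of `(ϱ, ∞)`. -/
lemma hardy_dyadic {ϱ : ℝ} (hϱ : 0 < ϱ) :
    Ioi ϱ ⊆ ⋃ j : ℕ, Ioc ((2:ℝ)^j * ϱ) ((2:ℝ)^(j+1) * ϱ) := by
  intro x hx
  have hx0 : ϱ < x := hx
  have hex : ∃ n : ℕ, x ≤ (2:ℝ)^(n+1) * ϱ := by
    obtain ⟨n, hn⟩ := pow_unbounded_of_one_lt (x / ϱ) (one_lt_two (α := ℝ))
    refine ⟨n, ?_⟩
    rw [div_lt_iff₀ hϱ] at hn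
    have h2 : (2:ℝ)^n ≤ (2:ℝ)^(n+1) := by
      apply pow_le_pow_right₀ one_le_two (Nat.le_succ n)
    nlinarith
  classical
  let j := Nat.find hex
  have hj : x ≤ (2:ℝ)^(j+1) * ϱ := Nat.find_spec hex
  have hj' : (2:ℝ)^j * ϱ < x := by
    rcases Nat.eq_zero_or_pos j with h0 | hpos
    · rw [h0]; simpa using hx0
    · have hmin := Nat.find_min hex (Nat.sub_lt hpos Nat.one_pos)
      push_neg at hmin
      have hji : j - 1 + 1 = j := Nat.succ_pred_eq_of_pos hpos
      rwa [hji] at hmin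
  exact Set.mem_iUnion.2 ⟨j, hj', hj⟩

end HardyAux

/-- Lemma 5.2: Hardy-type inequality for nondecreasing functions. -/
theorem stmt13 (k m s : ℝ) (hk : 0 < k) (hm : 0 < m) :
    ∃ C : ℝ, 0 < C ∧
      ∀ H : ℝ → ℝ, (∀ x ∈ Ioi (0 : ℝ), 0 ≤ H x) → MonotoneOn H (Ioi (0 : ℝ)) →
        (∫⁻ ϱ in Ioi (0 : ℝ), ENNReal.ofReal (ϱ ^ k) *
            (∫⁻ r in Ioi ϱ, ENNReal.ofReal (H r / r ^ s / r)) ^ m *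
            ENNReal.ofReal (1 / ϱ)) ≤
          ENNReal.ofReal C *
            ∫⁻ ϱ in Ioi (0 : ℝ), ENNReal.ofReal (ϱ ^ k) *
              (ENNReal.ofReal (H ϱ / ϱ ^ s)) ^ m * ENNReal.ofReal (1 / ϱ) := by
  classical
  obtain ⟨C₁, hC₁top, hC₁⟩ := hardy_sum_rpow hm (half_pos hk)
  set cs : ℝ := max 1 ((2:ℝ) ^ (-s-1)) with hcs
  have hcs0 : 0 < cs := lt_of_lt_of_le one_pos (le_max_left _ _)
  have two_rpow : ∀ e : ℝ, (2:ℝ≥0∞) ^ e = ENNReal.ofReal ((2:ℝ) ^ e) := by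
    intro e
    rw [← ENNReal.ofReal_rpow_of_pos (by norm_num : (0:ℝ) < 2)]
    norm_num
  set K : ℝ≥0∞ := C₁ * (ENNReal.ofReal cs) ^ m * (2:ℝ≥0∞) ^ (s*m-k) *
      (1 - (2:ℝ≥0∞) ^ (-(k/2)))⁻¹ with hK
  have hgeo_lt : (2:ℝ≥0∞) ^ (-(k/2)) < 1 :=
    ENNReal.rpow_lt_one_of_one_lt_of_neg one_lt_two (by linarith)
  have hKtop : K ≠ ∞ := by
    rw [hK]
    apply ENNReal.mul_ne_top
    apply ENNReal.mul_ne_top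
    apply ENNReal.mul_ne_top hC₁top
    · exact ENNReal.rpow_ne_top_of_nonneg hm.le ENNReal.ofReal_ne_top
    · rw [two_rpow]; exact ENNReal.ofReal_ne_top
    · exact ENNReal.inv_ne_top.2 (tsub_pos_of_lt hgeo_lt).ne'
  refine ⟨K.toReal + 1, by positivity, fun H hpos hmono => ?_⟩
  have hKC : K ≤ ENNReal.ofReal (K.toReal + 1) := by
    calc K = ENNReal.ofReal K.toReal := (ENNReal.ofReal_toReal hKtop).symm
      _ ≤ ENNReal.ofReal (K.toReal + 1) := ENNReal.ofReal_le_ofReal (by linarith)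
  -- the monotone extension of H
  set H' : ℝ → ℝ := fun x => if 0 < x then H x else 0 with hH'def
  have hH'mono : Monotone H' := by
    intro x y hxy
    by_cases hx : 0 < x
    · have hy : 0 < y := lt_of_lt_of_le hx hxy
      simpa [hH'def, hx, hy] using hmono (Set.mem_Ioi.2 hx) (Set.mem_Ioi.2 hy) hxy
    · by_cases hy : 0 < y
      · simpa [hH'def, hx, hy] using hpos y (Set.mem_Ioi.2 hy)
      · simp [hH'def, hx, hy]
  have hH'nonneg : ∀ x, 0 ≤ H' x := by
    intro x
    by_cases hx : 0 < x
    · simpa [hH'def, hx] using hpos x (Set.mem_Ioi.2 hx)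
    · simp [hH'def, hx]
  have hH'meas : Measurable H' := hH'mono.measurable
  set g : ℝ → ℝ≥0∞ := fun r => ENNReal.ofReal (H' r * r ^ (-s-1)) with hgdef
  have hgmeas : Measurable g :=
    ENNReal.measurable_ofReal.comp (hH'meas.mul (measurable_id.pow measurable_const))
  set G : ℝ → ℝ≥0∞ := fun t =>
    ENNReal.ofReal (t ^ (k-1-s*m)) * ENNReal.ofReal (H' t) ^ m with hGdef
  have hGmeas : Measurable G :=
    ((ENNReal.measurable_ofReal.comp (measurable_id.pow measurable_const)).mul
      ((ENNReal.measurable_ofReal.comp hH'meas).pow measurable_const))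
  set I : ℝ≥0∞ := ∫⁻ t in Ioi (0:ℝ), G t with hI
  -- the right-hand side integral equals I
  have hRHS : (∫⁻ ϱ in Ioi (0:ℝ), ENNReal.ofReal (ϱ ^ k) *
      (ENNReal.ofReal (H ϱ / ϱ ^ s)) ^ m * ENNReal.ofReal (1 / ϱ)) = I := by
    refine setLIntegral_congr_fun measurableSet_Ioi (
      fun ϱ hϱ => ?_)
    have hϱ : (0:ℝ) < ϱ := hϱ
    have hHH : H ϱ = H' ϱ := by simp [hH'def, hϱ]
    have h1 : H ϱ / ϱ ^ s = H' ϱ * ϱ ^ (-s) := by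
      rw [hHH, Real.rpow_neg hϱ.le, div_eq_mul_inv]
    have h2 : ENNReal.ofReal (ϱ ^ (-s)) ^ m = ENNReal.ofReal (ϱ ^ (-s*m)) := by
      rw [ENNReal.ofReal_rpow_of_pos (Real.rpow_pos_of_pos hϱ (-s))]
      congr 1
      exact (Real.rpow_mul hϱ.le (-s) m).symm
    have h3 : ENNReal.ofReal (ϱ ^ k) * ENNReal.ofReal (ϱ ^ (-s*m)) *
        ENNReal.ofReal (1/ϱ) = ENNReal.ofReal (ϱ ^ (k-1-s*m)) := by
      rw [← ENNReal.ofReal_mul (by positivity), ← ENNReal.ofReal_mul (by positivity)]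
      congr 1
      rw [one_div, ← Real.rpow_neg_one ϱ, ← Real.rpow_add hϱ, ← Real.rpow_add hϱ]
      ring_nf
    rw [h1, ENNReal.ofReal_mul (hH'nonneg ϱ), ENNReal.mul_rpow_of_nonneg _ _ hm.le, h2]
    rw [hGdef]
    simp only []
    rw [← h3]
    ring
  -- rewrite the inner integral
  have hInner : ∀ ϱ : ℝ, 0 < ϱ →
      (∫⁻ r in Ioi ϱ, ENNReal.ofReal (H r / r ^ s / r)) = ∫⁻ r in Ioi ϱ, g r := by
    intro ϱ hϱ
    refine setLIntegral_congr_fun measurableSet_Ioi (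
      fun r hr => ?_)
    have hr0 : 0 < r := lt_trans hϱ hr
    have hHH : H r = H' r := by simp [hH'def, hr0]
    have hre : r ^ (-s-1) = (r ^ s * r)⁻¹ := by
      rw [← Real.rpow_add_one hr0.ne' s, ← Real.rpow_neg hr0.le]
      ring_nf
    rw [hgdef]
    simp only []
    rw [div_div, hHH, div_eq_mul_inv, hre]
  -- dyadic piece estimate
  have ha : ∀ (j : ℕ) (ϱ : ℝ), 0 < ϱ →
      (∫⁻ r in Ioc ((2:ℝ)^j * ϱ) ((2:ℝ)^(j+1) * ϱ), g r) ≤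
        ENNReal.ofReal cs * ENNReal.ofReal (H' ((2:ℝ)^(j+1) * ϱ)) *
          ENNReal.ofReal (((2:ℝ)^j * ϱ) ^ (-s)) := by
    intro j ϱ hϱ
    set A : ℝ := (2:ℝ)^j * ϱ with hA
    have hA0 : 0 < A := by positivity
    have h2A : (2:ℝ)^(j+1) * ϱ = 2 * A := by rw [hA, pow_succ]; ring
    rw [h2A]
    have hbound : ∀ r ∈ Ioc A (2*A), g r ≤
        ENNReal.ofReal (H' (2*A) * (cs * A ^ (-s-1))) := by
      intro r hr
      have hr0 : 0 < r := lt_trans hA0 hr.1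
      apply ENNReal.ofReal_le_ofReal
      have hH'le : H' r ≤ H' (2*A) := hH'mono hr.2
      have hrp : r ^ (-s-1) ≤ cs * A ^ (-s-1) := by
        rcases le_or_gt (-s-1) 0 with hsle | hslt
        · have h1 : r ^ (-s-1) ≤ A ^ (-s-1) :=
            Real.rpow_le_rpow_of_nonpos hA0 hr.1.le hsle
          have h2 : (1:ℝ) ≤ cs := le_max_left _ _
          nlinarith [Real.rpow_nonneg hA0.le (-s-1)]
        · have h1 : r ^ (-s-1) ≤ (2*A) ^ (-s-1) :=
            Real.rpow_le_rpow hr0.le hr.2 hslt.le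
          have h2 : (2*A) ^ (-s-1) = (2:ℝ) ^ (-s-1) * A ^ (-s-1) :=
            Real.mul_rpow (by norm_num) hA0.le
          have h3 : (2:ℝ) ^ (-s-1) ≤ cs := le_max_right _ _
          nlinarith [Real.rpow_nonneg hA0.le (-s-1)]
      exact mul_le_mul hH'le hrp (Real.rpow_nonneg hr0.le _) (hH'nonneg _)
    calc (∫⁻ r in Ioc A (2*A), g r)
        ≤ ∫⁻ _ in Ioc A (2*A), ENNReal.ofReal (H' (2*A) * (cs * A ^ (-s-1))) :=
          setLIntegral_mono measurable_const hbound
      _ = ENNReal.ofReal (H' (2*A) * (cs * A ^ (-s-1))) * volume (Ioc A (2*A)) :=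
          setLIntegral_const _ _
      _ = ENNReal.ofReal cs * ENNReal.ofReal (H' (2*A)) * ENNReal.ofReal (A ^ (-s)) := by
          rw [Real.volume_Ioc, ← ENNReal.ofReal_mul
            (mul_nonneg (hH'nonneg _) (by positivity)),
            show ENNReal.ofReal cs * ENNReal.ofReal (H' (2*A)) *
                ENNReal.ofReal (A ^ (-s)) =
                ENNReal.ofReal (cs * H' (2*A) * A ^ (-s)) from by
              rw [ENNReal.ofReal_mul (mul_nonneg hcs0.le (hH'nonneg _)),
                ENNReal.ofReal_mul hcs0.le]]
          congr 1
          have hAs : A ^ (-s-1) * A = A ^ (-s) := by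
            rw [← Real.rpow_add_one hA0.ne' (-s-1)]
            norm_num
          linear_combination H' (2*A) * cs * hAs
  -- the summands
  set W : ℕ → ℝ → ℝ≥0∞ := fun j ϱ =>
    (C₁ * (2:ℝ≥0∞) ^ ((j:ℝ) * (k/2)) * (ENNReal.ofReal cs) ^ m) *
      ((ENNReal.ofReal (H' ((2:ℝ)^(j+1) * ϱ))) ^ m *
        (ENNReal.ofReal (((2:ℝ)^j * ϱ) ^ (-s))) ^ m *
        (ENNReal.ofReal (ϱ ^ k) * ENNReal.ofReal (1/ϱ))) with hW
  have hWmeas : ∀ j : ℕ, Measurable (W j) := by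
    intro j
    apply Measurable.const_mul
    apply Measurable.mul
    apply Measurable.mul
    · exact (ENNReal.measurable_ofReal.comp
        (hH'meas.comp (measurable_const_mul _))).pow measurable_const
    · exact (ENNReal.measurable_ofReal.comp
        ((measurable_const_mul _).pow measurable_const)).pow measurable_const
    · exact (ENNReal.measurable_ofReal.comp
        (measurable_id.pow measurable_const)).mul
        (ENNReal.measurable_ofReal.comp (measurable_const.div measurable_id))
  -- pointwise bound
  have hPW : ∀ ϱ ∈ Ioi (0:ℝ),
      ENNReal.ofReal (ϱ ^ k) * (∫⁻ r in Ioi ϱ, ENNReal.ofReal (H r / r ^ s / r)) ^ m *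
        ENNReal.ofReal (1 / ϱ) ≤ ∑' (j : ℕ), W j ϱ := by
    intro ϱ hϱ
    have hϱ : (0:ℝ) < ϱ := hϱ
    rw [hInner ϱ hϱ]
    have h1 : (∫⁻ r in Ioi ϱ, g r) ≤
        ∑' (j : ℕ), ∫⁻ r in Ioc ((2:ℝ)^j * ϱ) ((2:ℝ)^(j+1) * ϱ), g r :=
      le_trans (lintegral_mono_set (hardy_dyadic hϱ)) (lintegral_iUnion_le _ _)
    have h2 : (∫⁻ r in Ioi ϱ, g r) ^ m ≤
        C₁ * ∑' (j : ℕ), (2:ℝ≥0∞) ^ ((j:ℝ) * (k/2)) *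
          (∫⁻ r in Ioc ((2:ℝ)^j * ϱ) ((2:ℝ)^(j+1) * ϱ), g r) ^ m :=
      le_trans (ENNReal.rpow_le_rpow h1 hm.le) (hC₁ _)
    have h3 : ∀ j : ℕ, (∫⁻ r in Ioc ((2:ℝ)^j * ϱ) ((2:ℝ)^(j+1) * ϱ), g r) ^ m ≤
        (ENNReal.ofReal cs) ^ m * (ENNReal.ofReal (H' ((2:ℝ)^(j+1) * ϱ))) ^ m *
          (ENNReal.ofReal (((2:ℝ)^j * ϱ) ^ (-s))) ^ m := by
      intro j
      have := ENNReal.rpow_le_rpow (ha j ϱ hϱ) hm.le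
      rwa [ENNReal.mul_rpow_of_nonneg _ _ hm.le, ENNReal.mul_rpow_of_nonneg _ _ hm.le]
        at this
    calc ENNReal.ofReal (ϱ ^ k) * (∫⁻ r in Ioi ϱ, g r) ^ m * ENNReal.ofReal (1 / ϱ)
        ≤ ENNReal.ofReal (ϱ ^ k) * (C₁ * ∑' (j : ℕ), (2:ℝ≥0∞) ^ ((j:ℝ) * (k/2)) *
            (∫⁻ r in Ioc ((2:ℝ)^j * ϱ) ((2:ℝ)^(j+1) * ϱ), g r) ^ m) *
            ENNReal.ofReal (1 / ϱ) := by gcongr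
      _ ≤ ENNReal.ofReal (ϱ ^ k) * (C₁ * ∑' (j : ℕ), (2:ℝ≥0∞) ^ ((j:ℝ) * (k/2)) *
            ((ENNReal.ofReal cs) ^ m * (ENNReal.ofReal (H' ((2:ℝ)^(j+1) * ϱ))) ^ m *
              (ENNReal.ofReal (((2:ℝ)^j * ϱ) ^ (-s))) ^ m)) *
            ENNReal.ofReal (1 / ϱ) := by
          gcongr with j
          exact h3 j
      _ = ∑' (j : ℕ), W j ϱ := by
          rw [← ENNReal.tsum_mul_left (a := C₁), ← ENNReal.tsum_mul_left
            (a := ENNReal.ofReal (ϱ ^ k)), ← ENNReal.tsum_mul_right]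
          refine tsum_congr fun j => ?_
          rw [hW]
          ring
  -- the integral of each summand
  have hJ : ∀ j : ℕ, (∫⁻ ϱ in Ioi (0:ℝ), W j ϱ) =
      (C₁ * (2:ℝ≥0∞) ^ ((j:ℝ) * (k/2)) * (ENNReal.ofReal cs) ^ m) *
        (ENNReal.ofReal ((2:ℝ) ^ (s*m) * ((2:ℝ)^(j+1)) ^ (1-k)) *
          (ENNReal.ofReal (((2:ℝ)^(j+1)))⁻¹ * I)) := by
    intro j
    set b : ℝ := (2:ℝ)^j with hb
    set c : ℝ := (2:ℝ)^(j+1) with hc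
    have hb0 : (0:ℝ) < b := by positivity
    have hc0 : (0:ℝ) < c := by positivity
    have hcb : c = 2 * b := by rw [hb, hc, pow_succ]; ring
    have hVmeas : Measurable (fun ϱ : ℝ =>
        (ENNReal.ofReal (H' (c * ϱ))) ^ m *
          (ENNReal.ofReal ((b * ϱ) ^ (-s))) ^ m *
          (ENNReal.ofReal (ϱ ^ k) * ENNReal.ofReal (1/ϱ))) := by
      apply Measurable.mul
      apply Measurable.mul
      · exact (ENNReal.measurable_ofReal.comp
          (hH'meas.comp (measurable_const_mul _))).pow measurable_const
      · exact (ENNReal.measurable_ofReal.comp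
          ((measurable_const_mul _).pow measurable_const)).pow measurable_const
      · exact (ENNReal.measurable_ofReal.comp
          (measurable_id.pow measurable_const)).mul
          (ENNReal.measurable_ofReal.comp (measurable_const.div measurable_id))
    have step1 : (∫⁻ ϱ in Ioi (0:ℝ), W j ϱ) =
        (C₁ * (2:ℝ≥0∞) ^ ((j:ℝ) * (k/2)) * (ENNReal.ofReal cs) ^ m) *
          ∫⁻ ϱ in Ioi (0:ℝ),
            (ENNReal.ofReal (H' (c * ϱ))) ^ m *
              (ENNReal.ofReal ((b * ϱ) ^ (-s))) ^ m *
              (ENNReal.ofReal (ϱ ^ k) * ENNReal.ofReal (1/ϱ)) := by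
      rw [hW, lintegral_const_mul _ hVmeas]
    have step2 : (∫⁻ ϱ in Ioi (0:ℝ),
        (ENNReal.ofReal (H' (c * ϱ))) ^ m *
          (ENNReal.ofReal ((b * ϱ) ^ (-s))) ^ m *
          (ENNReal.ofReal (ϱ ^ k) * ENNReal.ofReal (1/ϱ))) =
        ENNReal.ofReal ((2:ℝ) ^ (s*m) * c ^ (1-k)) *
          ∫⁻ ϱ in Ioi (0:ℝ), G (c * ϱ) := by
      have hGc : Measurable fun ϱ : ℝ => G (c * ϱ) := hGmeas.comp (measurable_const_mul c)
      rw [← lintegral_const_mul _ hGc]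
      refine setLIntegral_congr_fun measurableSet_Ioi (
        fun ϱ hϱ => ?_)
      have hϱ : (0:ℝ) < ϱ := hϱ
      have hbϱ : (0:ℝ) < b * ϱ := by positivity
      have hofr : (ENNReal.ofReal ((b * ϱ) ^ (-s))) ^ m =
          ENNReal.ofReal ((b * ϱ) ^ (-s*m)) := by
        rw [ENNReal.ofReal_rpow_of_pos (Real.rpow_pos_of_pos hbϱ (-s))]
        congr 1
        exact (Real.rpow_mul hbϱ.le (-s) m).symm
      have e1 : (b*ϱ) ^ (-s*m) = b ^ (-s*m) * ϱ ^ (-s*m) := Real.mul_rpow hb0.le hϱ.le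
      have e2 : (c*ϱ) ^ (k-1-s*m) = c ^ (k-1-s*m) * ϱ ^ (k-1-s*m) :=
        Real.mul_rpow hc0.le hϱ.le
      have e3 : ϱ ^ (-s*m) * ϱ ^ k * (1/ϱ) = ϱ ^ (k-1-s*m) := by
        rw [one_div, ← Real.rpow_neg_one ϱ, ← Real.rpow_add hϱ, ← Real.rpow_add hϱ]
        ring_nf
      have e4 : c ^ (1-k) * c ^ (k-1-s*m) = c ^ (-s*m) := by
        rw [← Real.rpow_add hc0]
        ring_nf
      have e5 : c ^ (-s*m) = (2:ℝ) ^ (-s*m) * b ^ (-s*m) := by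
        rw [hcb]; exact Real.mul_rpow (by norm_num) hb0.le
      have e6 : (2:ℝ) ^ (s*m) * (2:ℝ) ^ (-s*m) = 1 := by
        rw [← Real.rpow_add two_pos]; simp
      have e7 : (2:ℝ) ^ (s*m) * (c ^ (1-k) * c ^ (k-1-s*m)) = b ^ (-s*m) := by
        rw [e4, e5, ← mul_assoc, e6, one_mul]
      have ekey : (b*ϱ) ^ (-s*m) * ϱ ^ k * (1/ϱ) =
          (2:ℝ) ^ (s*m) * c ^ (1-k) * (c*ϱ) ^ (k-1-s*m) := by
        calc (b*ϱ) ^ (-s*m) * ϱ ^ k * (1/ϱ)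
            = b ^ (-s*m) * (ϱ ^ (-s*m) * ϱ ^ k * (1/ϱ)) := by rw [e1]; ring
          _ = b ^ (-s*m) * ϱ ^ (k-1-s*m) := by rw [e3]
          _ = (2:ℝ) ^ (s*m) * c ^ (1-k) * (c*ϱ) ^ (k-1-s*m) := by
              rw [e2]
              linear_combination (-(ϱ ^ (k-1-s*m))) * e7
      have ekey' : ENNReal.ofReal ((b * ϱ) ^ (-s*m)) * ENNReal.ofReal (ϱ ^ k) *
          ENNReal.ofReal (1/ϱ) =
          ENNReal.ofReal ((2:ℝ) ^ (s*m) * c ^ (1-k)) *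
            ENNReal.ofReal ((c*ϱ) ^ (k-1-s*m)) := by
        rw [← ENNReal.ofReal_mul (by positivity), ← ENNReal.ofReal_mul (by positivity),
          ← ENNReal.ofReal_mul (by positivity)]
        exact congrArg _ ekey
      show (ENNReal.ofReal (H' (c * ϱ))) ^ m *
          (ENNReal.ofReal ((b * ϱ) ^ (-s))) ^ m *
          (ENNReal.ofReal (ϱ ^ k) * ENNReal.ofReal (1/ϱ)) =
          ENNReal.ofReal ((2:ℝ) ^ (s*m) * c ^ (1-k)) * G (c * ϱ)
      rw [hofr, hGdef]
      simp only []
      calc (ENNReal.ofReal (H' (c * ϱ))) ^ m * ENNReal.ofReal ((b * ϱ) ^ (-s*m)) *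
            (ENNReal.ofReal (ϱ ^ k) * ENNReal.ofReal (1/ϱ))
          = (ENNReal.ofReal ((b * ϱ) ^ (-s*m)) * ENNReal.ofReal (ϱ ^ k) *
              ENNReal.ofReal (1/ϱ)) * (ENNReal.ofReal (H' (c * ϱ))) ^ m := by ring
        _ = (ENNReal.ofReal ((2:ℝ) ^ (s*m) * c ^ (1-k)) *
              ENNReal.ofReal ((c*ϱ) ^ (k-1-s*m))) *
              (ENNReal.ofReal (H' (c * ϱ))) ^ m := by rw [ekey']
        _ = ENNReal.ofReal ((2:ℝ) ^ (s*m) * c ^ (1-k)) *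
              (ENNReal.ofReal ((c*ϱ) ^ (k-1-s*m)) *
                ENNReal.ofReal (H' (c * ϱ)) ^ m) := by ring
    have step3 : (∫⁻ ϱ in Ioi (0:ℝ), G (c * ϱ)) = ENNReal.ofReal c⁻¹ * I := by
      rw [hI]
      exact hardy_lint_scale G hGmeas hc0
    rw [step1, step2, step3]
  -- put everything together
  have hT : (∫⁻ ϱ in Ioi (0:ℝ), ENNReal.ofReal (ϱ ^ k) *
      (∫⁻ r in Ioi ϱ, ENNReal.ofReal (H r / r ^ s / r)) ^ m *
        ENNReal.ofReal (1 / ϱ)) ≤ ∑' (j : ℕ), ∫⁻ ϱ in Ioi (0:ℝ), W j ϱ := by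
    calc (∫⁻ ϱ in Ioi (0:ℝ), ENNReal.ofReal (ϱ ^ k) *
        (∫⁻ r in Ioi ϱ, ENNReal.ofReal (H r / r ^ s / r)) ^ m *
          ENNReal.ofReal (1 / ϱ))
        ≤ ∫⁻ ϱ in Ioi (0:ℝ), ∑' (j : ℕ), W j ϱ :=
          setLIntegral_mono' measurableSet_Ioi hPW
      _ = ∑' (j : ℕ), ∫⁻ ϱ in Ioi (0:ℝ), W j ϱ :=
          lintegral_tsum fun j => (hWmeas j).aemeasurable
  -- evaluate the coefficient sum
  have hDj : ∀ j : ℕ,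
      (C₁ * (2:ℝ≥0∞) ^ ((j:ℝ) * (k/2)) * (ENNReal.ofReal cs) ^ m) *
        (ENNReal.ofReal ((2:ℝ) ^ (s*m) * ((2:ℝ)^(j+1)) ^ (1-k)) *
          (ENNReal.ofReal (((2:ℝ)^(j+1)))⁻¹ * I)) =
      (C₁ * (ENNReal.ofReal cs) ^ m * (2:ℝ≥0∞) ^ (s*m-k) *
        ((2:ℝ≥0∞) ^ (-(k/2))) ^ j) * I := by
    intro j
    have hc0 : (0:ℝ) < (2:ℝ)^(j+1) := by positivity
    have h1 : ((2:ℝ)^(j+1)) ^ (1-k) * ((2:ℝ)^(j+1))⁻¹ = ((2:ℝ)^(j+1)) ^ (-k) := by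
      rw [← Real.rpow_neg_one ((2:ℝ)^(j+1)), ← Real.rpow_add hc0]
      ring_nf
    have h2 : ((2:ℝ)^(j+1)) ^ (-k) = (2:ℝ) ^ (((j:ℝ)+1) * (-k)) := by
      rw [← Real.rpow_natCast 2 (j+1), ← Real.rpow_mul (by norm_num)]
      push_cast
      ring_nf
    have h3 : ENNReal.ofReal ((2:ℝ) ^ (s*m) * ((2:ℝ)^(j+1)) ^ (1-k)) *
        ENNReal.ofReal (((2:ℝ)^(j+1)))⁻¹ =
        (2:ℝ≥0∞) ^ (s*m + ((j:ℝ)+1) * (-k)) := by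
      rw [← ENNReal.ofReal_mul (by positivity), two_rpow]
      congr 1
      rw [mul_assoc, h1, h2, ← Real.rpow_add two_pos]
    have h4 : (2:ℝ≥0∞) ^ ((j:ℝ) * (k/2)) * (2:ℝ≥0∞) ^ (s*m + ((j:ℝ)+1) * (-k)) =
        (2:ℝ≥0∞) ^ (s*m-k) * ((2:ℝ≥0∞) ^ (-(k/2))) ^ j := by
      rw [← ENNReal.rpow_natCast ((2:ℝ≥0∞) ^ (-(k/2))) j, ← ENNReal.rpow_mul,
        ← ENNReal.rpow_add _ _ two_ne_zero ENNReal.ofNat_ne_top,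
        ← ENNReal.rpow_add _ _ two_ne_zero ENNReal.ofNat_ne_top]
      congr 1
      ring
    calc (C₁ * (2:ℝ≥0∞) ^ ((j:ℝ) * (k/2)) * (ENNReal.ofReal cs) ^ m) *
        (ENNReal.ofReal ((2:ℝ) ^ (s*m) * ((2:ℝ)^(j+1)) ^ (1-k)) *
          (ENNReal.ofReal (((2:ℝ)^(j+1)))⁻¹ * I))
        = (C₁ * (ENNReal.ofReal cs) ^ m) * ((2:ℝ≥0∞) ^ ((j:ℝ) * (k/2)) *
            (ENNReal.ofReal ((2:ℝ) ^ (s*m) * ((2:ℝ)^(j+1)) ^ (1-k)) *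
              ENNReal.ofReal (((2:ℝ)^(j+1)))⁻¹)) * I := by ring
      _ = (C₁ * (ENNReal.ofReal cs) ^ m) * ((2:ℝ≥0∞) ^ (s*m-k) *
            ((2:ℝ≥0∞) ^ (-(k/2))) ^ j) * I := by rw [h3, h4]
      _ = (C₁ * (ENNReal.ofReal cs) ^ m * (2:ℝ≥0∞) ^ (s*m-k) *
            ((2:ℝ≥0∞) ^ (-(k/2))) ^ j) * I := by ring
  have hsum : (∑' (j : ℕ), ∫⁻ ϱ in Ioi (0:ℝ), W j ϱ) = K * I := by
    calc (∑' (j : ℕ), ∫⁻ ϱ in Ioi (0:ℝ), W j ϱ)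
        = ∑' (j : ℕ), (C₁ * (ENNReal.ofReal cs) ^ m * (2:ℝ≥0∞) ^ (s*m-k) *
            ((2:ℝ≥0∞) ^ (-(k/2))) ^ j) * I := by
          refine tsum_congr fun j => ?_
          rw [hJ j, hDj j]
      _ = (C₁ * (ENNReal.ofReal cs) ^ m * (2:ℝ≥0∞) ^ (s*m-k)) *
            (∑' (j : ℕ), ((2:ℝ≥0∞) ^ (-(k/2))) ^ j) * I := by
          rw [ENNReal.tsum_mul_right, ENNReal.tsum_mul_left]
      _ = K * I := by
          rw [ENNReal.tsum_geometric, hK]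
  calc (∫⁻ ϱ in Ioi (0:ℝ), ENNReal.ofReal (ϱ ^ k) *
      (∫⁻ r in Ioi ϱ, ENNReal.ofReal (H r / r ^ s / r)) ^ m *
        ENNReal.ofReal (1 / ϱ))
      ≤ K * I := hT.trans_eq hsum
    _ ≤ ENNReal.ofReal (K.toReal + 1) * I := by gcongr
    _ = ENNReal.ofReal (K.toReal + 1) *
        ∫⁻ ϱ in Ioi (0:ℝ), ENNReal.ofReal (ϱ ^ k) *
          (ENNReal.ofReal (H ϱ / ϱ ^ s)) ^ m * ENNReal.ofReal (1 / ϱ) := by rw [hRHS]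
end
end

section
/- (Lemma 5.3, part (i): lower Wolff potential bound for iterated Riesz potentials) Let n ≥ 2, β₁, β₂ ∈ (0,n) and q > 0. There exists a constant C₁ = C₁(β₁,β₂,n,q) > 0 such that for every nonnegative Borel measure ν on ℝⁿ, the pointwise inequality I_{β₂}( (I_{β₁} ν)^q )(x) ≥ C₁ · W_{(qβ₁+β₂)/(q+1), 1/q+1}(ν)(x) holds for all x ∈ ℝⁿ (both sides valued in [0,∞]). -/
open MeasureTheory Metric Set Filter ENNReal
open scoped RealInnerProductSpace NNReal Topology

noncomputable section

variable {n : ℕ}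

private lemma lint_tail {p c : ℝ} (hp : p < -1) (hc : 0 < c) :
    (∫⁻ t in Ioi c, ENNReal.ofReal (t ^ p)) = ENNReal.ofReal (c ^ (p + 1) / (-(p + 1))) := by
  rw [← MeasureTheory.ofReal_integral_eq_lintegral_ofReal (integrableOn_Ioi_rpow_of_lt hp hc)
      ((ae_restrict_iff' measurableSet_Ioi).2 (ae_of_all _ fun t ht =>
        Real.rpow_nonneg (hc.trans ht).le p)),
    integral_Ioi_rpow_of_lt hp hc, div_neg, neg_div]

/-- Lemma 5.3 (i): lower Wolff potential bound for iterated Riesz potentials. -/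
theorem stmt14 (n : ℕ) (hn : 2 ≤ n) (β₁ β₂ q : ℝ) (hβ₁ : 0 < β₁) (hβ₁n : β₁ < n)
    (hβ₂ : 0 < β₂) (hβ₂n : β₂ < n) (hq : 0 < q) :
    ∃ C₁ : ℝ, 0 < C₁ ∧
      ∀ (ν : Measure (En n)) (x : En n),
        ENNReal.ofReal C₁ * wolff n ((q * β₁ + β₂) / (q + 1)) (1 / q + 1) ν x ≤
          riesz n β₂ (fun y => rieszM n β₁ ν y ^ q) x := by
  have hn1 : (0:ℝ) < n := lt_of_lt_of_le hβ₁ hβ₁n.le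
  have hc₁ : (0:ℝ) < n - β₁ := sub_pos.2 hβ₁n
  have hc₂ : (0:ℝ) < n - β₂ := sub_pos.2 hβ₂n
  have hq0 : q ≠ 0 := hq.ne'
  have hq1 : q + 1 ≠ 0 := by positivity
  have hVpos : 0 < (volume (ball (0 : En n) 1)).toReal :=
    ENNReal.toReal_pos (measure_ball_pos _ _ one_pos).ne' measure_ball_lt_top.ne
  set V : ℝ := (volume (ball (0 : En n) 1)).toReal with hVdef
  set a : ℝ := 2 ^ (β₁ - (n:ℝ)) / (n - β₁) with hadef
  have hapos : 0 < a := div_pos (Real.rpow_pos_of_pos two_pos _) hc₁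
  refine ⟨(n - β₂) * ((a ^ q) * V), by positivity, ?_⟩
  intro ν x
  haveI : Nontrivial (En n) := Module.nontrivial_of_finrank_pos (R := ℝ)
    (by rw [finrank_euclideanSpace_fin]; omega)
  -- the auxiliary kernel
  set G : ℝ → En n → ℝ≥0∞ := fun r y =>
    (ν (ball x r)) ^ q * ENNReal.ofReal ((a * r ^ (β₁ - (n:ℝ))) ^ q) *
      ENNReal.ofReal ((n - β₂) * r ^ (β₂ - (n:ℝ) - 1)) *
      (ball x r).indicator 1 y with hGdef
  -- measurability of the kernel
  have hνmeas : Measurable fun r : ℝ => ν (ball x r) :=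
    Monotone.measurable (fun r₁ r₂ h => measure_mono (ball_subset_ball h))
  have hGmeas : Measurable (Function.uncurry G) := by
    have hind : (fun p : ℝ × En n => (ball x p.1).indicator (1 : En n → ℝ≥0∞) p.2)
        = Set.indicator {p : ℝ × En n | dist p.2 x < p.1} 1 := by
      funext p
      by_cases h : dist p.2 x < p.1
      · rw [Set.indicator_of_mem (mem_ball.2 h)]
        exact (Set.indicator_of_mem h 1).symm
      · rw [Set.indicator_of_notMem (fun hx => h (mem_ball.1 hx))]
        exact (Set.indicator_of_notMem h 1).symm
    have hset : MeasurableSet {p : ℝ × En n | dist p.2 x < p.1} :=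
      measurableSet_lt ((continuous_snd.dist continuous_const).measurable) measurable_fst
    refine Measurable.mul (Measurable.mul (Measurable.mul ?_ ?_) ?_) ?_
    · exact ((hνmeas.comp measurable_fst).pow measurable_const)
    · exact (((((measurable_id'.pow measurable_const)).const_mul a).pow
        measurable_const).comp measurable_fst).ennreal_ofReal
    · exact ((((measurable_id'.pow measurable_const)).const_mul (n - β₂)).comp
        measurable_fst).ennreal_ofReal
    · rw [hind]; exact measurable_const.indicator hset
  -- Step A : lower bound for the Riesz potential of ν on a ball
  have stepA : ∀ r : ℝ, 0 < r → ∀ y ∈ ball x r,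
      (ν (ball x r)) ^ q * ENNReal.ofReal ((a * r ^ (β₁ - (n:ℝ))) ^ q)
        ≤ rieszM n β₁ ν y ^ q := by
    intro r hr y hy
    have har : 0 < a * r ^ (β₁ - (n:ℝ)) := mul_pos hapos (Real.rpow_pos_of_pos hr _)
    rw [← ENNReal.ofReal_rpow_of_pos har, ← ENNReal.mul_rpow_of_nonneg _ _ hq.le]
    refine ENNReal.rpow_le_rpow ?_ hq.le
    have h2r : (0:ℝ) < 2 * r := by linarith
    have hp : β₁ - (n:ℝ) - 1 < -1 := by linarith
    have key : (∫⁻ ρ in Ioi (2*r), ν (ball x r) * ENNReal.ofReal (ρ ^ (β₁ - (n:ℝ) - 1)))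
        ≤ rieszM n β₁ ν y := by
      calc (∫⁻ ρ in Ioi (2*r), ν (ball x r) * ENNReal.ofReal (ρ ^ (β₁ - (n:ℝ) - 1)))
          ≤ ∫⁻ ρ in Ioi (2*r), ν (ball y ρ) * ENNReal.ofReal (ρ ^ (β₁ - (n:ℝ) - 1)) := by
            refine setLIntegral_mono' measurableSet_Ioi fun ρ hρ => ?_
            refine mul_le_mul_left (measure_mono fun z hz => ?_) _
            have h1 : dist z x < r := mem_ball.1 hz
            have h2 : dist y x < r := mem_ball.1 hy
            have h3 : (2*r : ℝ) < ρ := hρ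
            have := dist_triangle z x y
            rw [mem_ball]
            have h4 : dist x y = dist y x := dist_comm x y
            linarith
        _ ≤ ∫⁻ ρ in Ioi (0:ℝ), ν (ball y ρ) * ENNReal.ofReal (ρ ^ (β₁ - (n:ℝ) - 1)) :=
            lintegral_mono_set (Ioi_subset_Ioi (by linarith))
        _ = rieszM n β₁ ν y := rfl
    refine le_trans (le_of_eq ?_) key
    rw [lintegral_const_mul _ ((measurable_id'.pow measurable_const).ennreal_ofReal),
      lint_tail hp h2r]
    congr 1
    rw [show β₁ - (n:ℝ) - 1 + 1 = β₁ - (n:ℝ) by ring,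
      Real.mul_rpow (by norm_num) hr.le, hadef]
    field_simp
    rw [← div_neg, neg_sub]
  -- inner integral of G
  have innerEval : ∀ r : ℝ, (∫⁻ y, G r y) =
      (ν (ball x r)) ^ q * ENNReal.ofReal ((a * r ^ (β₁ - (n:ℝ))) ^ q) *
        ENNReal.ofReal ((n - β₂) * r ^ (β₂ - (n:ℝ) - 1)) * volume (ball x r) := by
    intro r
    simp only [hGdef]
    rw [lintegral_const_mul _ (measurable_one.indicator measurableSet_ball),
      lintegral_indicator_one measurableSet_ball]
  -- rewrite the Wolff potential
  have h1q : 1 / (1/q + 1 - 1) = q := by field_simp; ring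
  have h2q : (n:ℝ) - ((q * β₁ + β₂) / (q + 1)) * (1/q + 1) = (n:ℝ) - β₁ - β₂/q := by
    field_simp
    ring
  have hwolff : wolff n ((q * β₁ + β₂) / (q + 1)) (1/q + 1) ν x
      = ∫⁻ r in Ioi (0:ℝ),
          (ν (ball x r) / ENNReal.ofReal (r ^ ((n:ℝ) - β₁ - β₂/q))) ^ q *
            ENNReal.ofReal (1/r) := by
    unfold wolff
    rw [h1q, h2q]
  -- pointwise lower bound in r
  have lower : ∀ r : ℝ, r ∈ Ioi (0:ℝ) →
      ENNReal.ofReal ((n - β₂) * ((a ^ q) * V)) *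
        ((ν (ball x r) / ENNReal.ofReal (r ^ ((n:ℝ) - β₁ - β₂/q))) ^ q *
          ENNReal.ofReal (1/r)) ≤ ∫⁻ y, G r y := by
    intro r hr
    have hrpos : (0:ℝ) < r := hr
    have hrsq : (0:ℝ) < r ^ (((n:ℝ) - β₁ - β₂/q) * q) := Real.rpow_pos_of_pos hrpos _
    have hdiv : (ν (ball x r) / ENNReal.ofReal (r ^ ((n:ℝ) - β₁ - β₂/q))) ^ q
        = ν (ball x r) ^ q * ENNReal.ofReal (r ^ (-(((n:ℝ) - β₁ - β₂/q) * q))) := by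
      rw [ENNReal.div_rpow_of_nonneg _ _ hq.le,
        ENNReal.ofReal_rpow_of_pos (Real.rpow_pos_of_pos hrpos _),
        ← Real.rpow_mul hrpos.le, div_eq_mul_inv,
        ← ENNReal.ofReal_inv_of_pos hrsq, ← Real.rpow_neg hrpos.le]
    have hvol : ENNReal.ofReal (r ^ ((n:ℝ))) * ENNReal.ofReal V ≤ volume (ball x r) := by
      rw [Measure.addHaar_ball _ _ hrpos.le, finrank_euclideanSpace_fin,
        Real.rpow_natCast]
      exact mul_le_mul_right ENNReal.ofReal_toReal_le _
    have hXre : r ^ (-(((n:ℝ) - β₁ - β₂/q) * q)) * (1/r)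
        = r ^ ((β₁ - (n:ℝ)) * q) * (r ^ (β₂ - (n:ℝ) - 1) * r ^ ((n:ℝ))) := by
      rw [one_div, ← Real.rpow_neg_one r, ← Real.rpow_add hrpos, ← Real.rpow_add hrpos,
        ← Real.rpow_add hrpos]
      congr 1
      field_simp
      ring
    have hre : ((n:ℝ) - β₂) * ((a ^ q) * V) * (r ^ (-(((n:ℝ) - β₁ - β₂/q) * q)) * (1/r))
        = (a * r ^ (β₁ - (n:ℝ))) ^ q * (((n:ℝ) - β₂) * r ^ (β₂ - (n:ℝ) - 1)) *
            (r ^ ((n:ℝ)) * V) := by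
      rw [hXre, Real.mul_rpow hapos.le (Real.rpow_nonneg hrpos.le _),
        ← Real.rpow_mul hrpos.le]
      ring
    rw [innerEval r, hdiv]
    calc ENNReal.ofReal ((n - β₂) * ((a ^ q) * V)) *
          (ν (ball x r) ^ q * ENNReal.ofReal (r ^ (-(((n:ℝ) - β₁ - β₂/q) * q))) *
            ENNReal.ofReal (1/r))
        = ν (ball x r) ^ q *
            ENNReal.ofReal (((n:ℝ) - β₂) * ((a ^ q) * V) *
              (r ^ (-(((n:ℝ) - β₁ - β₂/q) * q)) * (1/r))) := by
          rw [show ENNReal.ofReal (((n:ℝ) - β₂) * ((a ^ q) * V) *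
              (r ^ (-(((n:ℝ) - β₁ - β₂/q) * q)) * (1/r)))
              = ENNReal.ofReal (((n:ℝ) - β₂) * ((a ^ q) * V)) *
                (ENNReal.ofReal (r ^ (-(((n:ℝ) - β₁ - β₂/q) * q))) *
                  ENNReal.ofReal (1/r)) from by
            rw [ENNReal.ofReal_mul (mul_nonneg hc₂.le (by positivity)),
              ENNReal.ofReal_mul (Real.rpow_nonneg hrpos.le _)]]
          ring
      _ = ν (ball x r) ^ q *
            ENNReal.ofReal ((a * r ^ (β₁ - (n:ℝ))) ^ q *
              (((n:ℝ) - β₂) * r ^ (β₂ - (n:ℝ) - 1)) * (r ^ ((n:ℝ)) * V)) := by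
          rw [hre]
      _ = ν (ball x r) ^ q * ENNReal.ofReal ((a * r ^ (β₁ - (n:ℝ))) ^ q) *
            ENNReal.ofReal (((n:ℝ) - β₂) * r ^ (β₂ - (n:ℝ) - 1)) *
            (ENNReal.ofReal (r ^ ((n:ℝ))) * ENNReal.ofReal V) := by
          have hA : (0:ℝ) ≤ (a * r ^ (β₁ - (n:ℝ))) ^ q :=
            Real.rpow_nonneg (by positivity) q
          have hB : (0:ℝ) ≤ ((n:ℝ) - β₂) * r ^ (β₂ - (n:ℝ) - 1) :=
            mul_nonneg hc₂.le (Real.rpow_nonneg hrpos.le _)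
          rw [ENNReal.ofReal_mul (mul_nonneg hA hB), ENNReal.ofReal_mul hA,
            ENNReal.ofReal_mul (Real.rpow_nonneg hrpos.le _)]
          ring
      _ ≤ ν (ball x r) ^ q * ENNReal.ofReal ((a * r ^ (β₁ - (n:ℝ))) ^ q) *
            ENNReal.ofReal (((n:ℝ) - β₂) * r ^ (β₂ - (n:ℝ) - 1)) * volume (ball x r) :=
          mul_le_mul_right hvol _
  -- pointwise upper bound in y
  have upper : ∀ᵐ y ∂(volume : Measure (En n)),
      (∫⁻ r in Ioi (0:ℝ), G r y) ≤
        rieszM n β₁ ν y ^ q * ENNReal.ofReal (‖x - y‖ ^ (β₂ - (n:ℝ))) := by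
    have hae : {x}ᶜ ∈ ae (volume : Measure (En n)) :=
      compl_mem_ae_iff.mpr (measure_singleton x)
    filter_upwards [hae] with y hy
    have hyx : y ≠ x := hy
    set d : ℝ := dist y x with hddef
    have hd : 0 < d := dist_pos.2 hyx
    have hdn : ‖x - y‖ = d := by rw [hddef, dist_comm, dist_eq_norm]
    have hGy : ∀ r : ℝ, G r y = (Ioi d).indicator
        (fun r => (ν (ball x r)) ^ q * ENNReal.ofReal ((a * r ^ (β₁ - (n:ℝ))) ^ q) *
          ENNReal.ofReal ((n - β₂) * r ^ (β₂ - (n:ℝ) - 1))) r := by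
      intro r
      by_cases h : r ∈ Ioi d
      · rw [Set.indicator_of_mem h]
        simp only [hGdef]
        rw [Set.indicator_of_mem (mem_ball.2 h), Pi.one_apply, mul_one]
      · rw [Set.indicator_of_notMem h]
        simp only [hGdef]
        rw [Set.indicator_of_notMem (fun hy' => h (mem_ball.1 hy')), mul_zero]
    calc (∫⁻ r in Ioi (0:ℝ), G r y)
        = ∫⁻ r in Ioi d, (ν (ball x r)) ^ q *
            ENNReal.ofReal ((a * r ^ (β₁ - (n:ℝ))) ^ q) *
            ENNReal.ofReal ((n - β₂) * r ^ (β₂ - (n:ℝ) - 1)) := by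
          rw [lintegral_congr hGy, lintegral_indicator measurableSet_Ioi _,
            Measure.restrict_restrict measurableSet_Ioi, Set.Ioi_inter_Ioi,
            max_eq_left hd.le]
      _ ≤ ∫⁻ r in Ioi d, rieszM n β₁ ν y ^ q *
            ENNReal.ofReal ((n - β₂) * r ^ (β₂ - (n:ℝ) - 1)) := by
          refine setLIntegral_mono' measurableSet_Ioi fun r hr => ?_
          have hrd : d < r := hr
          have hr0 : (0:ℝ) < r := hd.trans hrd
          have hyb : y ∈ ball x r := mem_ball.2 hrd
          exact mul_le_mul_left (stepA r hr0 y hyb) _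
      _ = rieszM n β₁ ν y ^ q * ENNReal.ofReal (‖x - y‖ ^ (β₂ - (n:ℝ))) := by
          rw [lintegral_const_mul _
            (((measurable_id'.pow measurable_const).const_mul _).ennreal_ofReal)]
          congr 1
          have hp : β₂ - (n:ℝ) - 1 < -1 := by linarith
          calc (∫⁻ r in Ioi d, ENNReal.ofReal ((n - β₂) * r ^ (β₂ - (n:ℝ) - 1)))
              = ENNReal.ofReal (n - β₂) * ∫⁻ r in Ioi d,
                  ENNReal.ofReal (r ^ (β₂ - (n:ℝ) - 1)) := by
                rw [← lintegral_const_mul _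
                  ((measurable_id'.pow measurable_const).ennreal_ofReal)]
                refine lintegral_congr fun r => ?_
                rw [← ENNReal.ofReal_mul hc₂.le]
            _ = ENNReal.ofReal (‖x - y‖ ^ (β₂ - (n:ℝ))) := by
                rw [lint_tail hp hd, ← ENNReal.ofReal_mul hc₂.le, hdn]
                congr 1
                rw [show β₂ - (n:ℝ) - 1 + 1 = β₂ - (n:ℝ) by ring]
                field_simp
                rw [← div_neg, neg_sub, div_self hc₂.ne']
  -- putting everything together
  rw [hwolff, ← lintegral_const_mul' _ _ ENNReal.ofReal_ne_top]
  calc (∫⁻ r in Ioi (0:ℝ), ENNReal.ofReal ((n - β₂) * ((a ^ q) * V)) *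
        ((ν (ball x r) / ENNReal.ofReal (r ^ ((n:ℝ) - β₁ - β₂/q))) ^ q *
          ENNReal.ofReal (1/r)))
      ≤ ∫⁻ r in Ioi (0:ℝ), ∫⁻ y, G r y := by
        refine lintegral_mono_ae ((ae_restrict_iff' measurableSet_Ioi).2
          (ae_of_all _ fun r hr => lower r hr))
    _ = ∫⁻ y, ∫⁻ r in Ioi (0:ℝ), G r y :=
        lintegral_lintegral_swap hGmeas.aemeasurable
    _ ≤ ∫⁻ y, rieszM n β₁ ν y ^ q * ENNReal.ofReal (‖x - y‖ ^ (β₂ - (n:ℝ))) :=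
        lintegral_mono_ae upper
    _ = riesz n β₂ (fun y => rieszM n β₁ ν y ^ q) x := rfl
end
end
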